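/- If ρ is an eigenvalue of the adjacency matrix A of G_t in the ILT model, then both (ρ + √(ρ² + 4(ρ+1)²))/2 and (ρ − √(ρ² + 4(ρ+1)²))/2 are eigenvalues of the adjacency matrix of G_{t+1}. -/

import Mathlib

open SimpleGraph Finset

universe u
variable {V : Type u}

/-- One step of the Iterated Local Transitivity model: every vertex `x` gets a
clone `Sum.inr x` joined to `x` and all of its neighbours; old vertices are `Sum.inl`. -/
def ILTstep (G : SimpleGraph V) : SimpleGraph (V ⊕ V) where
  Adj a b := match a, b with
    | Sum.inl x, Sum.inl y => G.Adj x y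
    | Sum.inl x, Sum.inr y => x = y ∨ G.Adj x y
    | Sum.inr x, Sum.inl y => x = y ∨ G.Adj x y
    | Sum.inr _, Sum.inr _ => False
  symm := by
    constructor
    rintro (x | x) (y | y) h
    · exact G.adj_symm h
    · exact h.imp Eq.symm (fun hh => G.adj_symm hh)
    · exact h.imp Eq.symm (fun hh => G.adj_symm hh)
    · exact h.elim
  loopless := by
    constructor
    rintro (x | x) h
    · exact G.irrefl h
    · exact h

instance ILTstepDecAdj (G : SimpleGraph V) [DecidableEq V] [DecidableRel G.Adj] :
    DecidableRel (ILTstep G).Adj := fun a b =>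
  match a, b with
  | Sum.inl x, Sum.inl y => inferInstanceAs (Decidable (G.Adj x y))
  | Sum.inl x, Sum.inr y => inferInstanceAs (Decidable (x = y ∨ G.Adj x y))
  | Sum.inr x, Sum.inl y => inferInstanceAs (Decidable (x = y ∨ G.Adj x y))
  | Sum.inr _, Sum.inr _ => inferInstanceAs (Decidable False)

/-- The vertex set of the ILT model at time `t`. -/
def ILTV (V : Type u) : ℕ → Type u
  | 0 => V
  | t + 1 => ILTV V t ⊕ ILTV V t

/-- The graph of the ILT model at time `t`, starting from `G`. -/
def ILTG (G : SimpleGraph V) : (t : ℕ) → SimpleGraph (ILTV V t)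
  | 0 => G
  | t + 1 => ILTstep (ILTG G t)

instance ILTVFintype [Fintype V] : ∀ t, Fintype (ILTV V t)
  | 0 => inferInstanceAs (Fintype V)
  | t + 1 => letI := ILTVFintype t
             inferInstanceAs (Fintype (ILTV V t ⊕ ILTV V t))

instance ILTVDecEq [DecidableEq V] : ∀ t, DecidableEq (ILTV V t)
  | 0 => inferInstanceAs (DecidableEq V)
  | t + 1 => letI := ILTVDecEq t
             inferInstanceAs (DecidableEq (ILTV V t ⊕ ILTV V t))

instance ILTGDecAdj (G : SimpleGraph V) [DecidableEq V] [DecidableRel G.Adj] :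
    ∀ t, DecidableRel (ILTG G t).Adj
  | 0 => inferInstanceAs (DecidableRel G.Adj)
  | t + 1 => letI : DecidableEq (ILTV V t) := ILTVDecEq t
             letI : DecidableRel (ILTG G t).Adj := ILTGDecAdj G t
             ILTstepDecAdj (ILTG G t)

/-- The volume of a graph: the sum of the degrees of its vertices. -/
def graphVol [Fintype V] (G : SimpleGraph V) [DecidableRel G.Adj] : ℕ :=
  ∑ v, G.degree v

/-- The Wiener index: the sum of distances over unordered pairs of vertices. -/
noncomputable def wienerIndex [Fintype V] (G : SimpleGraph V) : ℕ :=
  (∑ x : V, ∑ y : V, G.dist x y) / 2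

lemma ILTstep_adjMatrix [Fintype V] [DecidableEq V] (G : SimpleGraph V) [DecidableRel G.Adj] :
    (ILTstep G).adjMatrix ℝ =
      Matrix.fromBlocks (G.adjMatrix ℝ) (G.adjMatrix ℝ + 1) (G.adjMatrix ℝ + 1) 0 := by
  ext (i | i) (j | j)
  · simp only [adjMatrix_apply]
    simp [ILTstep, Matrix.fromBlocks]
    congr
  · by_cases h1 : i = j
    · subst h1
      simp only [adjMatrix_apply]
      simp [ILTstep, Matrix.fromBlocks, Matrix.one_apply]
    · simp only [adjMatrix_apply]
      simp [ILTstep, Matrix.fromBlocks, Matrix.one_apply, h1]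
  · by_cases h1 : i = j
    · subst h1
      simp only [adjMatrix_apply]
      simp [ILTstep, Matrix.fromBlocks, Matrix.one_apply]
    · simp only [adjMatrix_apply]
      simp [ILTstep, Matrix.fromBlocks, Matrix.one_apply, h1]
  · simp only [adjMatrix_apply]
    simp [ILTstep, Matrix.fromBlocks]

lemma spec_block_aux {n : Type u} [Fintype n] [DecidableEq n] (A : Matrix n n ℝ) (ρ μ : ℝ)
    (h : ρ ∈ spectrum ℝ A) (a b : ℝ) (hab : a ≠ 0 ∨ b ≠ 0)
    (h1 : a * ρ + b * (ρ + 1) = μ * a) (h2 : a * (ρ + 1) = μ * b) :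
    μ ∈ spectrum ℝ (Matrix.fromBlocks A (A + 1) (A + 1) 0) := by
  rw [spectrum.mem_iff] at h ⊢
  rw [Matrix.isUnit_iff_isUnit_det, isUnit_iff_ne_zero, not_not,
    ← Matrix.exists_mulVec_eq_zero_iff] at h ⊢
  obtain ⟨v, hv, hAv⟩ := h
  have hAv' : A.mulVec v = ρ • v := by
    have := hAv
    rw [Matrix.sub_mulVec] at this
    have halg : (algebraMap ℝ (Matrix n n ℝ) ρ) = ρ • (1 : Matrix n n ℝ) := by
      rw [Algebra.algebraMap_eq_smul_one]
    rw [halg, Matrix.smul_mulVec, Matrix.one_mulVec, sub_eq_zero] at this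
    exact this.symm
  refine ⟨Sum.elim (a • v) (b • v), ?_, ?_⟩
  · obtain ⟨i, hi⟩ := Function.ne_iff.mp hv
    rcases hab with ha | hb
    · intro hc
      have := congrFun hc (Sum.inl i)
      simp at this
      rcases this with h | h
      · exact ha h
      · exact hi h
    · intro hc
      have := congrFun hc (Sum.inr i)
      simp at this
      rcases this with h | h
      · exact hb h
      · exact hi h
  · rw [Matrix.sub_mulVec, Algebra.algebraMap_eq_smul_one, Matrix.smul_mulVec,
      Matrix.one_mulVec, sub_eq_zero]
    have e1 : A.mulVec (a • v) + (A + 1).mulVec (b • v) = (μ * a) • v := by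
      rw [Matrix.add_mulVec, Matrix.mulVec_smul, Matrix.mulVec_smul, Matrix.one_mulVec, hAv']
      funext i
      simp only [Pi.add_apply, Pi.smul_apply, smul_eq_mul]
      linear_combination v i * h1
    have e2 : (A + 1).mulVec (a • v) + (0 : Matrix n n ℝ).mulVec (b • v) = (μ * b) • v := by
      rw [Matrix.zero_mulVec, add_zero, Matrix.add_mulVec, Matrix.mulVec_smul,
        Matrix.one_mulVec, hAv']
      funext i
      simp only [Pi.add_apply, Pi.smul_apply, smul_eq_mul]
      linear_combination v i * h2
    have key : (Matrix.fromBlocks A (A + 1) (A + 1) (0 : Matrix n n ℝ)).mulVec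
        (Sum.elim (a • v) (b • v)) =
        Sum.elim ((μ * a) • v) ((μ * b) • v) := by
      rw [Matrix.fromBlocks_mulVec]
      have hl : (Sum.elim (a • v) (b • v)) ∘ Sum.inl = a • v := rfl
      have hr : (Sum.elim (a • v) (b • v)) ∘ Sum.inr = b • v := rfl
      rw [hl, hr, e1, e2]
    rw [key]
    funext i
    rcases i with i | i <;>
      simp only [Pi.smul_apply, Sum.elim_inl, Sum.elim_inr, smul_eq_mul] <;> ring

theorem ILT_adjacency_eigenvalues [Fintype V] [DecidableEq V]
    (G : SimpleGraph V) [DecidableRel G.Adj] (ρ : ℝ)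
    (h : ρ ∈ spectrum ℝ (G.adjMatrix ℝ)) :
    (ρ + Real.sqrt (ρ ^ 2 + 4 * (ρ + 1) ^ 2)) / 2
        ∈ spectrum ℝ ((ILTstep G).adjMatrix ℝ) ∧
    (ρ - Real.sqrt (ρ ^ 2 + 4 * (ρ + 1) ^ 2)) / 2
        ∈ spectrum ℝ ((ILTstep G).adjMatrix ℝ) := by
  have hs : Real.sqrt (ρ ^ 2 + 4 * (ρ + 1) ^ 2) ^ 2 = ρ ^ 2 + 4 * (ρ + 1) ^ 2 :=
    Real.sq_sqrt (by positivity)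
  rw [ILTstep_adjMatrix]
  constructor
  · refine spec_block_aux (G.adjMatrix ℝ) ρ _ h (ρ + 1)
      ((Real.sqrt (ρ ^ 2 + 4 * (ρ + 1) ^ 2) - ρ) / 2) ?_ (by ring) ?_
    · by_cases hρ : ρ = -1
      · right
        subst hρ
        norm_num
      · left
        intro hc
        exact hρ (by linarith)
    · linear_combination -hs / 4
  · refine spec_block_aux (G.adjMatrix ℝ) ρ _ h
      ((ρ - Real.sqrt (ρ ^ 2 + 4 * (ρ + 1) ^ 2)) / 2) (ρ + 1) ?_ ?_ (by ring)
    · by_cases hρ : ρ = -1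
      · left
        subst hρ
        norm_num
      · right
        intro hc
        exact hρ (by linarith)
    · linear_combination -hs / 4
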